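/- arXiv:2003.05143 — 2 statements merged into one kernel-verified Lean document; each statement's English description precedes it below -/
import Mathlib

section
/- Let $(\Omega,\mathcal F,\mathbb P)$ be a probability space, $T>0$, and let $g:[0,T]\times\Omega\to\mathbb R$ be jointly measurable with $g\le 0$ and with $s\mapsto g(s,\omega)$ Lebesgue integrable on $[0,T]$ for a.e. $\omega$, and assume $\mathbb E[\int_0^T |g_s|\exp(\int_0^s g_r\,dr)\,ds]<\infty$. Set $h(t):=\mathbb E[\exp(\int_0^t g_s\,ds)]$. Then $h(t)>0$ for all $t$ and $h(t)=\exp\Big(\int_0^t \frac{\mathbb E[g_s\exp(\int_0^s g_r\,dr)]}{h(s)}\,ds\Big)$ for every $t\in[0,T]$. -/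
open MeasureTheory intervalIntegral Set

section Helpers

/-- `∫_0^c e^{-y} dy = 1 - e^{-c}`. -/
lemma integral_exp_neg_eq (c : ℝ) :
    ∫ y in (0:ℝ)..c, Real.exp (-y) = 1 - Real.exp (-c) := by
  have hD : ∀ y ∈ Set.uIcc (0:ℝ) c, HasDerivAt (fun y => -Real.exp (-y)) (Real.exp (-y)) y := by
    intro y _
    have := ((hasDerivAt_id y).neg.exp).neg
    simpa [Pi.neg_def] using this
  rw [intervalIntegral.integral_eq_sub_of_hasDerivAt hD
    ((Real.continuous_exp.comp continuous_neg).intervalIntegrable _ _)]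
  simp
  ring

end Helpers

/-- Change of variables for the primitive of a nonnegative integrable function. -/
lemma cov_primitive (w ψ : ℝ → ℝ) (t : ℝ) (ht : 0 ≤ t) (hwm : Measurable w)
    (hw0 : ∀ s, 0 ≤ w s) (hwi : IntegrableOn w (Set.Icc 0 t)) (hψ : Continuous ψ) :
    ∫ s in (0:ℝ)..t, w s * ψ (∫ r in (0:ℝ)..s, w r) =
      ∫ y in (0:ℝ)..(∫ r in (0:ℝ)..t, w r), ψ y := by
  set C : ℝ → ℝ := fun s => max 0 (min s t) with hC
  have hCc : Continuous C := continuous_const.max (continuous_id.min continuous_const)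
  have hCmem : ∀ s, C s ∈ Icc 0 t := fun s => ⟨le_max_left _ _,
    max_le ht (min_le_right _ _)⟩
  have hCid : ∀ s ∈ Icc (0:ℝ) t, C s = s := fun s hs => by
    simp [hC, min_eq_left hs.2, max_eq_right hs.1]
  set v : ℝ → ℝ := fun s => ∫ r in Ioc (0:ℝ) (C s), w r with hv
  have hvc : Continuous v :=
    (continuousOn_primitive (f := w) (μ := volume) hwi).comp_continuous hCc hCmem
  have hvs : ∀ s ∈ Icc (0:ℝ) t, v s = ∫ r in (0:ℝ)..s, w r := fun s hs => by
    rw [hv]; simp only [hCid s hs]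
    rw [integral_of_le hs.1]
  have hvmono : Monotone v := by
    intro a b hab
    have hCab : C a ≤ C b := max_le_max le_rfl (min_le_min_right _ hab)
    exact setIntegral_mono_set (hwi.mono_set (Ioc_subset_Icc_self.trans
        (Icc_subset_Icc le_rfl (hCmem b).2)))
      (Filter.Eventually.of_forall fun s => hw0 s)
      (Filter.Eventually.of_forall (Ioc_subset_Ioc le_rfl hCab))
  have hv0 : ∀ s, 0 ≤ v s := fun s =>
    setIntegral_nonneg measurableSet_Ioc fun r _ => hw0 r
  -- the pushforward measure
  set ν : Measure ℝ := (volume.restrict (Icc (0:ℝ) t)).withDensity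
      (fun s => ENNReal.ofReal (w s)) with hνdef
  have hνapp : ∀ E : Set ℝ, MeasurableSet E →
      ν E = ∫⁻ s in E ∩ Icc (0:ℝ) t, ENNReal.ofReal (w s) := by
    intro E hE
    rw [hνdef, withDensity_apply _ hE, Measure.restrict_restrict hE]
  have hνIcc : ∀ c ∈ Icc (0:ℝ) t, ν (Icc 0 c) = ENNReal.ofReal (v c) := by
    intro c hc
    rw [hνapp _ measurableSet_Icc, Set.inter_eq_left.2 (Icc_subset_Icc le_rfl hc.2),
      ← ofReal_integral_eq_lintegral_ofReal
        (hwi.mono_set (Icc_subset_Icc le_rfl hc.2))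
        (Filter.Eventually.of_forall fun s => hw0 s)]
    rw [hvs c hc, integral_of_le hc.1, integral_Icc_eq_integral_Ioc]
  haveI : IsFiniteMeasure ν := by
    constructor
    rw [hνapp _ MeasurableSet.univ, Set.univ_inter]
    rw [← ofReal_integral_eq_lintegral_ofReal hwi
      (Filter.Eventually.of_forall fun s => hw0 s)]
    exact ENNReal.ofReal_lt_top
  have hmap : Measure.map v ν = volume.restrict (Icc 0 (v t)) := by
    haveI : IsFiniteMeasure (Measure.map v ν) := by
      constructor
      rw [Measure.map_apply hvc.measurable MeasurableSet.univ]
      exact measure_lt_top ν _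
    refine MeasureTheory.Measure.ext_of_Iic _ _ (fun y => ?_)
    rw [Measure.map_apply hvc.measurable measurableSet_Iic]
    rcases lt_or_ge y 0 with hy | hy
    · have h1 : v ⁻¹' Iic y = ∅ := by
        ext s; simp only [mem_preimage, mem_Iic, mem_empty_iff_false, iff_false]
        exact fun hle => absurd (hle.trans_lt hy) (not_lt.2 (hv0 s))
      have h2 : Iic y ∩ Icc (0:ℝ) (v t) = ∅ := by
        ext s; simp only [mem_inter_iff, mem_Iic, mem_Icc, mem_empty_iff_false, iff_false]
        rintro ⟨h1', h2', _⟩; exact absurd (h1'.trans_lt hy) (not_lt.2 h2')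
      rw [h1, Measure.restrict_apply measurableSet_Iic, h2]
      simp
    · -- y ≥ 0
      set A : Set ℝ := Icc (0:ℝ) t ∩ v ⁻¹' Iic y with hA
      have hAclosed : IsClosed A := isClosed_Icc.inter (isClosed_Iic.preimage hvc)
      have hAne : A.Nonempty := ⟨0, ⟨le_rfl, ht⟩, by
        simp only [mem_preimage, mem_Iic]
        have : v 0 = 0 := by
          rw [hvs 0 ⟨le_rfl, ht⟩, integral_same]
        rw [this]; exact hy⟩
      have hAbdd : BddAbove A := ⟨t, fun s hs => hs.1.2⟩
      set σ := sSup A with hσ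
      have hσmem : σ ∈ A := hAclosed.csSup_mem hAne hAbdd
      have hAeq : A = Icc 0 σ := by
        apply Subset.antisymm
        · intro s hs; exact ⟨hs.1.1, le_csSup hAbdd hs⟩
        · intro s hs
          refine ⟨⟨hs.1, hs.2.trans hσmem.1.2⟩, ?_⟩
          exact (hvmono hs.2).trans hσmem.2
      have hνA : ν (v ⁻¹' Iic y) = ENNReal.ofReal (v σ) := by
        rw [hνapp _ (measurableSet_Iic.preimage hvc.measurable), Set.inter_comm, ← hA, hAeq]
        rw [← hνIcc σ hσmem.1, hνapp _ measurableSet_Icc,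
          Set.inter_eq_left.2 (Icc_subset_Icc le_rfl hσmem.1.2)]
      have hvσ : v σ = min y (v t) := by
        rcases eq_or_lt_of_le hσmem.1.2 with hσt | hσt
        · rw [hσt]
          have : v t ≤ y := by rw [← hσt]; exact hσmem.2
          rw [min_eq_right this]
        · have hyv : y ≤ v σ := by
            have hev : ∀ᶠ s in nhdsWithin σ (Ioi σ), y ≤ v s := by
              have hlt : ∀ᶠ s in nhdsWithin σ (Ioi σ), s < t :=
                eventually_nhdsWithin_of_eventually_nhds (Filter.tendsto_id.eventually_lt_const
                  hσt)
              filter_upwards [hlt, self_mem_nhdsWithin] with s hst hsσ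
              by_contra hcon
              push_neg at hcon
              have : s ∈ A := ⟨⟨hσmem.1.1.trans (le_of_lt hsσ), le_of_lt hst⟩, le_of_lt hcon⟩
              exact absurd (le_csSup hAbdd this) (not_le.2 hsσ)
            exact ge_of_tendsto ((hvc.tendsto σ).mono_left nhdsWithin_le_nhds) hev
          have hvσy : v σ = y := le_antisymm hσmem.2 hyv
          rw [hvσy, min_eq_left (hvσy ▸ hvmono hσmem.1.2)]
      rw [hνA, hvσ, Measure.restrict_apply measurableSet_Iic]
      have : Iic y ∩ Icc (0:ℝ) (v t) = Icc 0 (min y (v t)) := by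
        ext s
        simp only [mem_inter_iff, mem_Iic, mem_Icc, le_min_iff]
        tauto
      rw [this, Real.volume_Icc]
      congr 1
      rw [sub_zero]
  -- conclude by integrating ψ against both sides of hmap
  have hvt : v t = ∫ r in (0:ℝ)..t, w r := hvs t ⟨ht, le_rfl⟩
  have hwmn : Measurable fun s => (w s).toNNReal := hwm.real_toNNReal
  have hνnn : ν = (volume.restrict (Icc (0:ℝ) t)).withDensity
      (fun s => ((w s).toNNReal : ENNReal)) := by
    rw [hνdef]; rfl
  calc ∫ s in (0:ℝ)..t, w s * ψ (∫ r in (0:ℝ)..s, w r)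
      = ∫ s in Icc (0:ℝ) t, w s * ψ (v s) := by
        rw [integral_of_le ht, ← integral_Icc_eq_integral_Ioc]
        exact setIntegral_congr_fun measurableSet_Icc (fun s hs => by rw [hvs s hs])
    _ = ∫ s in Icc (0:ℝ) t, (w s).toNNReal • ψ (v s) := by
        apply setIntegral_congr_fun measurableSet_Icc
        intro s _
        simp [NNReal.smul_def, Real.coe_toNNReal _ (hw0 s)]
    _ = ∫ s, ψ (v s) ∂ν := by
        rw [hνnn, integral_withDensity_eq_integral_smul hwmn]
    _ = ∫ y, ψ y ∂(Measure.map v ν) :=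
        (integral_map hvc.aemeasurable hψ.aestronglyMeasurable).symm
    _ = ∫ y in Icc (0:ℝ) (v t), ψ y := by rw [hmap]
    _ = ∫ y in (0:ℝ)..(∫ r in (0:ℝ)..t, w r), ψ y := by
        rw [← hvt, integral_Icc_eq_integral_Ioc, integral_of_le (hv0 t)]

/-- The exponential representation (3.5) for the normalizing factor
`h(t) = E[exp(∫_0^t g_s ds)]`: `h` is positive and
`h(t) = exp(∫_0^t E[g_s exp(∫_0^s g_r dr)]/h(s) ds)`. -/
theorem fpk_normalizer_exponential_representation
    {Ω : Type*} [MeasurableSpace Ω] (P : Measure Ω) [IsProbabilityMeasure P]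
    (T : ℝ) (hT : 0 < T) (g : ℝ → Ω → ℝ)
    (hmeas : Measurable (Function.uncurry g))
    (hneg : ∀ s ω, g s ω ≤ 0)
    (hint : ∀ᵐ ω ∂P, IntegrableOn (fun s => g s ω) (Set.Icc 0 T))
    (hmom : Integrable
      (fun ω => ∫ s in (0:ℝ)..T, |g s ω| * Real.exp (∫ r in (0:ℝ)..s, g r ω)) P)
    (h : ℝ → ℝ)
    (hdef : ∀ t, h t = ∫ ω, Real.exp (∫ s in (0:ℝ)..t, g s ω) ∂P) :
    ∀ t ∈ Set.Icc (0:ℝ) T,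
      0 < h t ∧
      h t = Real.exp (∫ s in (0:ℝ)..t,
        (∫ ω, g s ω * Real.exp (∫ r in (0:ℝ)..s, g r ω) ∂P) / h s) := by
  classical
  -- the jointly measurable primitive
  set U : ℝ × Ω → ℝ := fun p => ∫ r, (Set.Ioc (0:ℝ) p.1).indicator (fun r => g r p.2) r
    with hUdef
  have hUmeas : StronglyMeasurable U := by
    apply MeasureTheory.StronglyMeasurable.integral_prod_right'
      (f := fun q : (ℝ × Ω) × ℝ => (Set.Ioc (0:ℝ) q.1.1).indicator (fun r => g r q.1.2) q.2)
    have heq : (fun q : (ℝ × Ω) × ℝ => (Set.Ioc (0:ℝ) q.1.1).indicator (fun r => g r q.1.2) q.2)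
        = fun q => if 0 < q.2 ∧ q.2 ≤ q.1.1 then g q.2 q.1.2 else 0 := by
      ext q; rw [Set.indicator_apply]; rfl
    rw [heq]
    apply Measurable.stronglyMeasurable
    refine Measurable.ite ?_ ?_ measurable_const
    · exact (measurableSet_lt measurable_const measurable_snd).inter
        (measurableSet_le measurable_snd measurable_fst.fst)
    · exact hmeas.comp (measurable_snd.prodMk measurable_fst.snd)
  have hUint : ∀ s ω, 0 ≤ s → (∫ r in (0:ℝ)..s, g r ω) = U (s, ω) := by
    intro s ω hs
    rw [intervalIntegral.integral_of_le hs, hUdef,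
      ← MeasureTheory.integral_indicator measurableSet_Ioc]
  have hU0 : ∀ p, U p ≤ 0 := by
    intro p
    apply integral_nonpos
    intro r
    rw [Set.indicator_apply]
    split_ifs
    exacts [hneg _ _, le_rfl]
  have hexpU_le : ∀ p, Real.exp (U p) ≤ 1 := fun p => by
    simpa using Real.exp_le_exp.2 (hU0 p)
  have hXmeas : ∀ s, Measurable fun ω => Real.exp (U (s, ω)) := fun s =>
    Real.measurable_exp.comp (hUmeas.measurable.comp measurable_prodMk_left)
  have hXint : ∀ s, Integrable (fun ω => Real.exp (U (s, ω))) P := fun s =>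
    Integrable.mono' (integrable_const 1) (hXmeas s).aestronglyMeasurable
      (Filter.Eventually.of_forall fun ω => by
        rw [Real.norm_eq_abs, abs_of_pos (Real.exp_pos _)]; exact hexpU_le _)
  have hdefU : ∀ s, 0 ≤ s → h s = ∫ ω, Real.exp (U (s, ω)) ∂P := by
    intro s hs
    rw [hdef s]
    exact MeasureTheory.integral_congr_ae (Filter.Eventually.of_forall fun ω =>
      show Real.exp (∫ r in (0:ℝ)..s, g r ω) = Real.exp (U (s, ω)) by rw [hUint s ω hs])
  have hpos : ∀ s, 0 ≤ s → 0 < h s := by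
    intro s hs
    rw [hdefU s hs]
    rw [integral_pos_iff_support_of_nonneg (fun ω => (Real.exp_pos _).le) (hXint s)]
    have hsup : Function.support (fun ω => Real.exp (U (s, ω))) = Set.univ := by
      ext ω; simp [Real.exp_ne_zero]
    rw [hsup]
    simp
  have hle1 : ∀ s, 0 ≤ s → h s ≤ 1 := by
    intro s hs
    rw [hdefU s hs]
    simpa using integral_mono (hXint s) (integrable_const 1) fun ω => hexpU_le _
  have hII : ∀ (ω : Ω), IntegrableOn (fun r => g r ω) (Set.Icc 0 T) →
      ∀ a b : ℝ, 0 ≤ a → b ≤ T → a ≤ b → IntervalIntegrable (fun r => g r ω) volume a b := by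
    intro ω hω a b ha hbT hab
    apply IntegrableOn.intervalIntegrable
    rw [Set.uIcc_of_le hab]
    exact hω.mono_set (Set.Icc_subset_Icc ha hbT)
  have hanti : ∀ a b : ℝ, 0 ≤ a → a ≤ b → b ≤ T → h b ≤ h a := by
    intro a b ha hab hbT
    rw [hdefU a ha, hdefU b (ha.trans hab)]
    apply integral_mono_ae (hXint b) (hXint a)
    filter_upwards [hint] with ω hω
    apply Real.exp_le_exp.2
    rw [← hUint a ω ha, ← hUint b ω (ha.trans hab)]
    have h1 : IntervalIntegrable (fun r => g r ω) volume 0 a :=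
      hII ω hω 0 a le_rfl (hab.trans hbT) ha
    have h2 : IntervalIntegrable (fun r => g r ω) volume a b :=
      hII ω hω a b ha hbT hab
    have hadd : (∫ r in (0:ℝ)..a, g r ω) + ∫ r in a..b, g r ω = ∫ r in (0:ℝ)..b, g r ω :=
      integral_add_adjacent_intervals h1 h2
    have hnp : (∫ r in a..b, g r ω) ≤ 0 := by
      rw [intervalIntegral.integral_of_le hab]
      exact MeasureTheory.integral_nonpos fun r => hneg r ω
    linarith
  -- Step B : ω-wise identity
  have hstepB : ∀ᵐ ω ∂P, ∀ u : ℝ, 0 ≤ u → u ≤ T →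
      Real.exp (∫ r in (0:ℝ)..u, g r ω) =
        1 + ∫ s in (0:ℝ)..u, g s ω * Real.exp (∫ r in (0:ℝ)..s, g r ω) := by
    filter_upwards [hint] with ω hω
    intro u hu huT
    have hwm : Measurable fun s => -g s ω := (hmeas.comp measurable_prodMk_right).neg
    have hwi : IntegrableOn (fun s => -g s ω) (Set.Icc 0 u) :=
      (hω.mono_set (Set.Icc_subset_Icc le_rfl huT)).neg
    have hk := cov_primitive (fun s => -g s ω) (fun y => Real.exp (-y)) u hu hwm
      (fun s => neg_nonneg.2 (hneg s ω)) hwi (Real.continuous_exp.comp continuous_neg)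
    simp only [intervalIntegral.integral_neg, neg_neg] at hk
    rw [integral_exp_neg_eq, neg_neg] at hk
    have hk2 : (∫ s in (0:ℝ)..u, -(g s ω * Real.exp (∫ r in (0:ℝ)..s, g r ω))) =
        1 - Real.exp (∫ r in (0:ℝ)..u, g r ω) := by
      rw [← hk]
      apply intervalIntegral.integral_congr
      intro s _
      ring
    rw [intervalIntegral.integral_neg] at hk2
    linarith
  -- Product integrability
  have hprodAll : ∀ u : ℝ, 0 ≤ u → u ≤ T →
      Integrable (fun p : Ω × ℝ => g p.2 p.1 * Real.exp (U (p.2, p.1)))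
        (P.prod (volume.restrict (Set.Ioc 0 u))) := by
    intro u hu huT
    have hjm : AEStronglyMeasurable (fun p : Ω × ℝ => g p.2 p.1 * Real.exp (U (p.2, p.1)))
        (P.prod (volume.restrict (Set.Ioc 0 u))) := by
      apply Measurable.aestronglyMeasurable
      exact (hmeas.comp (measurable_snd.prodMk measurable_fst)).mul
        (Real.measurable_exp.comp (hUmeas.measurable.comp (measurable_snd.prodMk measurable_fst)))
    refine (integrable_prod_iff hjm).2 ⟨?_, ?_⟩
    · filter_upwards [hint] with ω hω
      have hsub : Set.Ioc (0:ℝ) u ⊆ Set.Icc (0:ℝ) T :=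
        Set.Ioc_subset_Icc_self.trans (Set.Icc_subset_Icc le_rfl huT)
      apply Integrable.mono (hω.mono_set hsub)
      · exact ((hmeas.comp measurable_prodMk_right).mul
          (Real.measurable_exp.comp (hUmeas.measurable.comp
            measurable_prodMk_right))).aestronglyMeasurable
      · apply Filter.Eventually.of_forall
        intro s
        rw [Real.norm_eq_abs, Real.norm_eq_abs, abs_mul, abs_of_pos (Real.exp_pos _)]
        exact mul_le_of_le_one_right (abs_nonneg _) (hexpU_le _)
    · have hρmeas : StronglyMeasurable fun ω => ∫ s in Set.Ioc (0:ℝ) u,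
          ‖g s ω * Real.exp (U (s, ω))‖ := by
        apply MeasureTheory.StronglyMeasurable.integral_prod_right'
          (f := fun p : Ω × ℝ => ‖g p.2 p.1 * Real.exp (U (p.2, p.1))‖)
        apply Measurable.stronglyMeasurable
        exact ((hmeas.comp (measurable_snd.prodMk measurable_fst)).mul
          (Real.measurable_exp.comp (hUmeas.measurable.comp
            (measurable_snd.prodMk measurable_fst)))).norm
      apply Integrable.mono' hmom hρmeas.aestronglyMeasurable
      filter_upwards [hint] with ω hω
      have hφint : IntegrableOn (fun s => |g s ω| * Real.exp (U (s, ω))) (Set.Ioc 0 T) := by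
        apply Integrable.mono (hω.mono_set Set.Ioc_subset_Icc_self)
        · exact ((hmeas.comp measurable_prodMk_right).abs.mul
            (Real.measurable_exp.comp (hUmeas.measurable.comp
              measurable_prodMk_right))).aestronglyMeasurable
        · apply Filter.Eventually.of_forall
          intro s
          have he : ‖|g s ω| * Real.exp (U (s, ω))‖ = |g s ω| * Real.exp (U (s, ω)) := by
            rw [Real.norm_eq_abs,
              abs_of_nonneg (mul_nonneg (abs_nonneg _) (Real.exp_pos _).le)]
          rw [he, Real.norm_eq_abs]
          exact mul_le_of_le_one_right (abs_nonneg _) (hexpU_le _)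
      have hnorm_eq : ∀ s : ℝ, ‖g s ω * Real.exp (U (s, ω))‖ = |g s ω| * Real.exp (U (s, ω)) := by
        intro s
        rw [Real.norm_eq_abs, abs_mul, abs_of_pos (Real.exp_pos _)]
      rw [Real.norm_eq_abs, abs_of_nonneg (setIntegral_nonneg measurableSet_Ioc
        fun s _ => norm_nonneg _)]
      calc (∫ s in Set.Ioc (0:ℝ) u, ‖g s ω * Real.exp (U (s, ω))‖)
          = ∫ s in Set.Ioc (0:ℝ) u, |g s ω| * Real.exp (U (s, ω)) := by
            exact setIntegral_congr_fun measurableSet_Ioc fun s _ => hnorm_eq s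
        _ ≤ ∫ s in Set.Ioc (0:ℝ) T, |g s ω| * Real.exp (U (s, ω)) := by
            apply setIntegral_mono_set hφint
            · exact Filter.Eventually.of_forall fun s =>
                mul_nonneg (abs_nonneg _) (Real.exp_pos _).le
            · exact Filter.Eventually.of_forall (Set.Ioc_subset_Ioc le_rfl huT)
        _ = ∫ s in (0:ℝ)..T, |g s ω| * Real.exp (∫ r in (0:ℝ)..s, g r ω) := by
            rw [intervalIntegral.integral_of_le hT.le]
            exact (setIntegral_congr_fun measurableSet_Ioc fun s hs => by
              rw [hUint s ω hs.1.le]).symm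
  -- the mean drift
  set m : ℝ → ℝ := fun s => ∫ ω, g s ω * Real.exp (U (s, ω)) ∂P with hmdef
  -- Step C : integral identity for h
  have hID : ∀ u : ℝ, 0 ≤ u → u ≤ T →
      h u = 1 + ∫ s in Set.Ioc (0:ℝ) u, m s := by
    intro u hu huT
    have hprod := hprodAll u hu huT
    have hswap := integral_integral_swap
      (f := fun (ω : Ω) (s : ℝ) => g s ω * Real.exp (U (s, ω))) hprod
    calc h u = ∫ ω, Real.exp (U (u, ω)) ∂P := hdefU u hu
      _ = ∫ ω, (1 + ∫ s in Set.Ioc (0:ℝ) u, g s ω * Real.exp (U (s, ω))) ∂P := by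
          apply MeasureTheory.integral_congr_ae
          filter_upwards [hstepB] with ω hω
          show Real.exp (U (u, ω)) = 1 + ∫ s in Set.Ioc (0:ℝ) u, g s ω * Real.exp (U (s, ω))
          rw [← hUint u ω hu, hω u hu huT, intervalIntegral.integral_of_le hu]
          congr 1
          exact setIntegral_congr_fun measurableSet_Ioc fun s hs => by
            rw [hUint s ω hs.1.le]
      _ = 1 + ∫ ω, (∫ s in Set.Ioc (0:ℝ) u, g s ω * Real.exp (U (s, ω))) ∂P := by
          rw [MeasureTheory.integral_add (integrable_const 1) hprod.integral_prod_left,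
            MeasureTheory.integral_const]
          simp
      _ = 1 + ∫ s in Set.Ioc (0:ℝ) u, m s := by rw [hswap]
  intro t htmem
  obtain ⟨ht0, htT⟩ := htmem
  refine ⟨hpos t ht0, ?_⟩
  -- integrability of m
  have hm0 : ∀ s, m s ≤ 0 := by
    intro s
    apply integral_nonpos
    intro ω
    have := mul_le_mul_of_nonneg_right (hneg s ω) (Real.exp_pos (U (s, ω))).le
    simpa using this
  have hm_meas : StronglyMeasurable m := by
    apply MeasureTheory.StronglyMeasurable.integral_prod_right'
      (f := fun p : ℝ × Ω => g p.1 p.2 * Real.exp (U p))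
    exact (hmeas.mul (Real.measurable_exp.comp hUmeas.measurable)).stronglyMeasurable
  have hmint : IntegrableOn m (Set.Icc 0 t) := by
    rw [integrableOn_Icc_iff_integrableOn_Ioc]
    have hρ := (hprodAll t ht0 htT).integral_norm_prod_right
    apply Integrable.mono hρ hm_meas.aestronglyMeasurable
    apply Filter.Eventually.of_forall
    intro s
    have h1 : ‖m s‖ ≤ ∫ ω, ‖g s ω * Real.exp (U (s, ω))‖ ∂P := norm_integral_le_integral_norm _
    have h2 : ‖∫ ω, ‖g s ω * Real.exp (U (s, ω))‖ ∂P‖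
        = ∫ ω, ‖g s ω * Real.exp (U (s, ω))‖ ∂P :=
      Real.norm_of_nonneg (integral_nonneg fun ω => norm_nonneg _)
    rw [h2]
    exact h1
  -- Step E : second change of variables
  set ψ : ℝ → ℝ := fun y => (max (1 - y) (h t))⁻¹ with hψdef
  have hψc : Continuous ψ :=
    ((continuous_const.sub continuous_id).max continuous_const).inv₀
      fun y => ne_of_gt (lt_of_lt_of_le (hpos t ht0) (le_max_right _ _))
  have hkey := cov_primitive (fun s => -m s) ψ t ht0 hm_meas.measurable.neg
    (fun s => neg_nonneg.2 (hm0 s)) hmint.neg hψc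
  beta_reduce at hkey
  have hprim : ∀ u : ℝ, 0 ≤ u → u ≤ T → (∫ r in (0:ℝ)..u, -m r) = 1 - h u := by
    intro u hu huT
    rw [intervalIntegral.integral_neg, intervalIntegral.integral_of_le hu, hID u hu huT]
    ring
  have hL : (∫ s in (0:ℝ)..t, (-m s) * ψ (∫ r in (0:ℝ)..s, -m r))
      = - ∫ s in (0:ℝ)..t, m s / h s := by
    rw [← intervalIntegral.integral_neg]
    apply intervalIntegral.integral_congr
    intro s hs
    rw [Set.uIcc_of_le ht0] at hs
    show -m s * ψ (∫ r in (0:ℝ)..s, -m r) = -(m s / h s)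
    rw [hprim s hs.1 (hs.2.trans htT)]
    have hmax : max (1 - (1 - h s)) (h t) = h s := by
      rw [sub_sub_cancel]
      exact max_eq_left (hanti s t hs.1 hs.2 htT)
    show (-m s) * (max (1 - (1 - h s)) (h t))⁻¹ = -(m s / h s)
    rw [hmax, div_eq_mul_inv, neg_mul]
  have hR : (∫ y in (0:ℝ)..(1 - h t), ψ y) = - Real.log (h t) := by
    have h1 : (0:ℝ) ≤ 1 - h t := sub_nonneg.2 (hle1 t ht0)
    have hD : ∀ y ∈ Set.uIcc (0:ℝ) (1 - h t),
        HasDerivAt (fun y => -Real.log (1 - y)) (ψ y) y := by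
      intro y hy
      rw [Set.uIcc_of_le h1] at hy
      have hy1 : h t ≤ 1 - y := by linarith [hy.2]
      have hy1' : (0:ℝ) < 1 - y := lt_of_lt_of_le (hpos t ht0) hy1
      have hd1 : HasDerivAt (fun y : ℝ => 1 - y) (-1) y := (hasDerivAt_id y).const_sub 1
      have hd2 := (hd1.log (ne_of_gt hy1')).neg
      have hd2' : HasDerivAt (fun y => -Real.log (1 - y)) (-(-1 / (1 - y))) y := hd2
      convert hd2' using 1
      show ψ y = -(-1 / (1 - y))
      show (max (1 - y) (h t))⁻¹ = -(-1 / (1 - y))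
      rw [max_eq_left hy1]
      field_simp
    rw [intervalIntegral.integral_eq_sub_of_hasDerivAt hD (hψc.intervalIntegrable _ _)]
    rw [sub_sub_cancel]
    simp
  have hlog : (∫ s in (0:ℝ)..t, m s / h s) = Real.log (h t) := by
    have := hkey
    rw [hL, hprim t ht0 htT, hR] at this
    linarith
  have hfinal : (∫ s in (0:ℝ)..t,
      (∫ ω, g s ω * Real.exp (∫ r in (0:ℝ)..s, g r ω) ∂P) / h s)
      = ∫ s in (0:ℝ)..t, m s / h s := by
    apply intervalIntegral.integral_congr
    intro s hs
    rw [Set.uIcc_of_le ht0] at hs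
    show (∫ ω, g s ω * Real.exp (∫ r in (0:ℝ)..s, g r ω) ∂P) / h s = m s / h s
    congr 1
    exact MeasureTheory.integral_congr_ae (Filter.Eventually.of_forall fun ω =>
      show g s ω * Real.exp (∫ r in (0:ℝ)..s, g r ω) = g s ω * Real.exp (U (s, ω))
      by rw [hUint s ω hs.1])
  rw [hfinal, hlog, Real.exp_log (hpos t ht0)]
end

section
/- Let $n\ge1$, $b\in\mathbb R^n$, $B\in\mathbb R^{n\times n}$, let $a\in\mathbb R^{n\times n}$ be symmetric positive definite, $\alpha\in\mathbb R$, $\delta\in\mathbb R^n$, and let $G\in\mathbb R^{n\times n}$ be symmetric positive semi-definite. Suppose $H\in\mathbb R^{n\times n}$ is symmetric and satisfies the algebraic Riccati equation $2HaH-B^{\top}H-HB-G=0$, and $v\in\mathbb R^n$ satisfies $2Hav-B^{\top}v-2Hb-\delta=0$. Define $r(x)=\alpha+\delta^{\top}x+x^{\top}Gx$, $\phi(x)=\exp(-v^{\top}x-x^{\top}Hx)$, and $\lambda=\alpha-\tfrac12 v^{\top}av+\mathrm{tr}(aH)+v^{\top}b$. Then for every $x\in\mathbb R^n$: $(b+Bx)^{\top}\nabla\phi(x)+\tfrac12\mathrm{tr}\big(a\,\nabla^2\phi(x)\big)-r(x)\phi(x)=-\lambda\,\phi(x)$.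 -/
open Matrix

/-- The second partial derivative `∂²f/∂xᵢ∂xⱼ` of a function on `ℝⁿ`. -/
noncomputable def secondPartial {n : ℕ} (f : (Fin n → ℝ) → ℝ) (i j : Fin n)
    (x : Fin n → ℝ) : ℝ :=
  fderiv ℝ (fun z => fderiv ℝ f z (Pi.single j 1)) x (Pi.single i 1)

noncomputable def dotCLM {n : ℕ} (c : Fin n → ℝ) : (Fin n → ℝ) →L[ℝ] ℝ :=
  ∑ i, c i • (ContinuousLinearMap.proj i : (Fin n → ℝ) →L[ℝ] ℝ)

lemma dotCLM_apply {n : ℕ} (c x : Fin n → ℝ) : dotCLM c x = c ⬝ᵥ x := by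
  simp [dotCLM, dotProduct, ContinuousLinearMap.sum_apply]

lemma hasFDerivAt_dot {n : ℕ} (c x : Fin n → ℝ) :
    HasFDerivAt (fun z : Fin n → ℝ => c ⬝ᵥ z) (dotCLM c) x := by
  have h : (fun z : Fin n → ℝ => c ⬝ᵥ z) = ⇑(dotCLM c) :=
    funext fun z => (dotCLM_apply c z).symm
  rw [h]; exact (dotCLM c).hasFDerivAt

lemma hasFDerivAt_quad {n : ℕ} (M : Matrix (Fin n) (Fin n) ℝ) (x : Fin n → ℝ) :
    HasFDerivAt (fun z : Fin n → ℝ => z ⬝ᵥ M.mulVec z)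
      (dotCLM (M.mulVec x + M.transpose.mulVec x)) x := by
  have h : (fun z : Fin n → ℝ => z ⬝ᵥ M.mulVec z)
      = fun z => ∑ i, z i * (M i ⬝ᵥ z) := by
    funext z; simp [dotProduct, Matrix.mulVec]
  rw [h]
  have hterm : ∀ i : Fin n, HasFDerivAt (fun z : Fin n → ℝ => z i * (M i ⬝ᵥ z))
      (x i • dotCLM (M i) + (M i ⬝ᵥ x) • (ContinuousLinearMap.proj i)) x := by
    intro i
    exact ((ContinuousLinearMap.proj i : (Fin n → ℝ) →L[ℝ] ℝ).hasFDerivAt).mul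
      (hasFDerivAt_dot (M i) x)
  have hsum := HasFDerivAt.fun_sum (fun i (_ : i ∈ Finset.univ) => hterm i)
  refine hsum.congr_fderiv ?_
  ext u
  simp only [ContinuousLinearMap.sum_apply, ContinuousLinearMap.add_apply,
    ContinuousLinearMap.smul_apply, dotCLM_apply, ContinuousLinearMap.proj_apply,
    add_dotProduct, smul_eq_mul]
  rw [Finset.sum_add_distrib]
  have h1 : ∑ i, x i * (M i ⬝ᵥ u) = (M.transpose.mulVec x) ⬝ᵥ u := by
    rw [Matrix.mulVec_transpose]
    simp only [Matrix.vecMul, dotProduct, Matrix.mulVec, Finset.sum_mul,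
      Finset.mul_sum]
    rw [Finset.sum_comm]
    congr 1; funext i; congr 1; funext k; ring
  have h2 : ∑ i, (M i ⬝ᵥ x) * u i = (M.mulVec x) ⬝ᵥ u := by
    simp [Matrix.mulVec, dotProduct]
  rw [h1, h2]; ring

lemma dot_mulVec_symm {n : ℕ} (c : Fin n → ℝ) (M : Matrix (Fin n) (Fin n) ℝ) (d : Fin n → ℝ) :
    c ⬝ᵥ M.mulVec d = d ⬝ᵥ M.transpose.mulVec c := by
  rw [Matrix.dotProduct_mulVec, ← Matrix.mulVec_transpose, dotProduct_comm]

lemma quad_transpose {n : ℕ} (M : Matrix (Fin n) (Fin n) ℝ) (x : Fin n → ℝ) :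
    x ⬝ᵥ M.transpose.mulVec x = x ⬝ᵥ M.mulVec x := by
  rw [Matrix.mulVec_transpose, dotProduct_comm, ← Matrix.dotProduct_mulVec]

lemma quadForm_sum {n : ℕ} (M : Matrix (Fin n) (Fin n) ℝ) (c : Fin n → ℝ) :
    ∑ i, ∑ j, M i j * (c i * c j) = c ⬝ᵥ M.mulVec c := by
  simp only [dotProduct, Matrix.mulVec, Finset.mul_sum]
  congr 1; funext i; congr 1; funext j; ring

lemma trace_mul_sum {n : ℕ} (A H : Matrix (Fin n) (Fin n) ℝ) :
    (A * H).trace = ∑ i, ∑ j, A i j * H j i := by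
  simp [Matrix.trace, Matrix.mul_apply, Matrix.diag]

lemma hasFDerivAt_exp_quad {n : ℕ} (v : Fin n → ℝ) (H : Matrix (Fin n) (Fin n) ℝ)
    (x : Fin n → ℝ) :
    HasFDerivAt (fun z : Fin n → ℝ => Real.exp (-(v ⬝ᵥ z) - z ⬝ᵥ H.mulVec z))
      (Real.exp (-(v ⬝ᵥ x) - x ⬝ᵥ H.mulVec x) •
        dotCLM (-(v + (H.mulVec x + H.transpose.mulVec x)))) x := by
  have h := ((hasFDerivAt_dot v x).fun_neg.fun_sub (hasFDerivAt_quad H x)).exp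
  refine h.congr_fderiv ?_
  congr 1
  ext u
  simp only [dotCLM_apply, ContinuousLinearMap.coe_sub', ContinuousLinearMap.coe_neg',
    Pi.sub_apply, Pi.neg_apply, neg_dotProduct, add_dotProduct]
  ring

/-- Eigenpair verification of Example 3.4: with the affine generator
`𝒜f(x) = (b+Bx)ᵀ∇f(x) + ½tr(a∇²f(x))` and fitness `g = -r`, the pair
`(λ, φ(x) = exp(-vᵀx - xᵀHx))` solves `(𝒜+g)φ = -λφ`, given the Riccati and linear
equations for `H` and `v`. -/
theorem quadratic_fitness_eigenpair_verification
    (n : ℕ) (hn : 1 ≤ n)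
    (b v δ : Fin n → ℝ) (B a G H : Matrix (Fin n) (Fin n) ℝ)
    (ha : a.PosDef) (hG : G.PosSemidef) (hH : H.IsSymm)
    (hRic : (2:ℝ) • (H * a * H) - B.transpose * H - H * B - G = 0)
    (hlin : (2:ℝ) • (H * a).mulVec v - B.transpose.mulVec v - (2:ℝ) • H.mulVec b - δ = 0)
    (α : ℝ)
    (r : (Fin n → ℝ) → ℝ) (hr : ∀ x, r x = α + δ ⬝ᵥ x + x ⬝ᵥ G.mulVec x)
    (φ : (Fin n → ℝ) → ℝ) (hφ : ∀ x, φ x = Real.exp (-(v ⬝ᵥ x) - x ⬝ᵥ H.mulVec x))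
    (lam : ℝ)
    (hlam : lam = α - (1 / 2) * (v ⬝ᵥ a.mulVec v) + (a * H).trace + v ⬝ᵥ b) :
    ∀ x : Fin n → ℝ,
      fderiv ℝ φ x (b + B.mulVec x)
        + (1 / 2) * (∑ i, ∑ j, a i j * secondPartial φ i j x)
        - r x * φ x
      = -lam * φ x := by
  intro x
  have hHt : H.transpose = H := hH
  have haT : a.transpose = a := by
    have := ha.1
    simpa [Matrix.IsHermitian, Matrix.conjTranspose_eq_transpose_of_trivial] using this
  have hHsym : ∀ i j, H i j = H j i := by
    intro i j
    conv_lhs => rw [← hHt]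
    simp
  -- the gradient direction vector
  set w : (Fin n → ℝ) → (Fin n → ℝ) := fun z => -(v + (H.mulVec z + H.mulVec z)) with hw
  have hφfun : φ = fun z : Fin n → ℝ => Real.exp (-(v ⬝ᵥ z) - z ⬝ᵥ H.mulVec z) :=
    funext hφ
  have hDφ : ∀ z, HasFDerivAt φ (φ z • dotCLM (w z)) z := by
    intro z
    rw [hφfun]
    have h := hasFDerivAt_exp_quad v H z
    rw [hHt] at h
    exact h
  have hfd : ∀ z u, fderiv ℝ φ z u = φ z * (w z ⬝ᵥ u) := by
    intro z u
    rw [(hDφ z).fderiv]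
    simp [dotCLM_apply]
  -- second partials
  have hsp : ∀ i j, secondPartial φ i j x = φ x * (w x i * w x j - 2 * H i j) := by
    intro i j
    have hinner : (fun z => fderiv ℝ φ z (Pi.single j 1)) = fun z => φ z * (w z j) := by
      funext z
      rw [hfd]
      congr 1
      simp [dotProduct_single]
    have hwjf : (fun z : Fin n → ℝ => w z j) = fun z => -v j - ((H j + H j) ⬝ᵥ z) := by
      funext z
      simp [hw, Matrix.mulVec, add_dotProduct]
      ring
    have hwj : HasFDerivAt (fun z : Fin n → ℝ => w z j)
        ((0 : (Fin n → ℝ) →L[ℝ] ℝ) - dotCLM (H j + H j)) x := by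
      rw [hwjf]
      exact (hasFDerivAt_const (-v j) x).sub (hasFDerivAt_dot (H j + H j) x)
    have hprod := (hDφ x).fun_mul hwj
    have : secondPartial φ i j x
        = (φ x • ((0 : (Fin n → ℝ) →L[ℝ] ℝ) - dotCLM (H j + H j))
            + (w x j) • (φ x • dotCLM (w x))) (Pi.single i 1) := by
      rw [secondPartial, hinner, hprod.fderiv]
    rw [this]
    simp only [ContinuousLinearMap.add_apply, ContinuousLinearMap.smul_apply,
      ContinuousLinearMap.sub_apply, ContinuousLinearMap.zero_apply, dotCLM_apply,
      add_dotProduct, dotProduct_single, smul_eq_mul]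
    simp only [Pi.add_apply, hHsym j i]
    ring
  -- sum of second partials
  have hsum : ∑ i, ∑ j, a i j * secondPartial φ i j x
      = φ x * (w x ⬝ᵥ a.mulVec (w x)) - 2 * φ x * (a * H).trace := by
    have step : ∀ i j, a i j * secondPartial φ i j x
        = φ x * (a i j * (w x i * w x j)) - 2 * φ x * (a i j * H i j) := by
      intro i j; rw [hsp]; ring
    calc ∑ i, ∑ j, a i j * secondPartial φ i j x
        = ∑ i, ∑ j, (φ x * (a i j * (w x i * w x j)) - 2 * φ x * (a i j * H i j)) := by
          exact Finset.sum_congr rfl fun i _ => Finset.sum_congr rfl fun j _ => step i j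
      _ = φ x * (∑ i, ∑ j, a i j * (w x i * w x j))
            - 2 * φ x * (∑ i, ∑ j, a i j * H i j) := by
          rw [Finset.mul_sum, Finset.mul_sum, ← Finset.sum_sub_distrib]
          exact Finset.sum_congr rfl fun i _ => by
            rw [Finset.mul_sum, Finset.mul_sum, ← Finset.sum_sub_distrib]
      _ = φ x * (w x ⬝ᵥ a.mulVec (w x)) - 2 * φ x * (a * H).trace := by
          rw [quadForm_sum, trace_mul_sum]
          congr 2
          exact Finset.sum_congr rfl fun i _ => Finset.sum_congr rfl fun j _ => by
            rw [hHsym j i]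
  -- scalar equations from the matrix hypotheses
  have hE1 : 2 * (x ⬝ᵥ (H * a * H).mulVec x) - 2 * (x ⬝ᵥ (H * B).mulVec x)
      - x ⬝ᵥ G.mulVec x = 0 := by
    have h0 : x ⬝ᵥ ((2:ℝ) • (H * a * H) - B.transpose * H - H * B - G).mulVec x = 0 := by
      rw [hRic]; simp
    have hq : x ⬝ᵥ (B.transpose * H).mulVec x = x ⬝ᵥ (H * B).mulVec x := by
      have : (H * B).transpose = B.transpose * H := by
        rw [Matrix.transpose_mul, hHt]
      rw [← this, quad_transpose]
    rw [Matrix.sub_mulVec, Matrix.sub_mulVec, Matrix.sub_mulVec,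
      dotProduct_sub, dotProduct_sub, dotProduct_sub,
      Matrix.smul_mulVec, dotProduct_smul] at h0
    rw [hq] at h0
    simp only [smul_eq_mul] at h0
    linarith
  have hE2 : 2 * (x ⬝ᵥ (H * a).mulVec v) - x ⬝ᵥ B.transpose.mulVec v
      - 2 * (x ⬝ᵥ H.mulVec b) - δ ⬝ᵥ x = 0 := by
    have h0 : x ⬝ᵥ ((2:ℝ) • (H * a).mulVec v - B.transpose.mulVec v
        - (2:ℝ) • H.mulVec b - δ) = 0 := by
      rw [hlin]; simp
    rw [dotProduct_sub, dotProduct_sub, dotProduct_sub,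
      dotProduct_smul, dotProduct_smul, dotProduct_comm x δ] at h0
    simp only [smul_eq_mul] at h0
    linarith
  -- expansion of the drift term
  have e1 : w x ⬝ᵥ (b + B.mulVec x)
      = -(v ⬝ᵥ b) - x ⬝ᵥ B.transpose.mulVec v - 2 * (x ⬝ᵥ H.mulVec b)
        - 2 * (x ⬝ᵥ (H * B).mulVec x) := by
    have c1 : v ⬝ᵥ B.mulVec x = x ⬝ᵥ B.transpose.mulVec v := dot_mulVec_symm v B x
    have c2 : H.mulVec x ⬝ᵥ b = x ⬝ᵥ H.mulVec b := by
      rw [dotProduct_comm, dot_mulVec_symm b H x, hHt]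
    have c3 : H.mulVec x ⬝ᵥ B.mulVec x = x ⬝ᵥ (H * B).mulVec x := by
      rw [dot_mulVec_symm (H.mulVec x) B x, Matrix.mulVec_mulVec]
      have ht : (H * B).transpose = B.transpose * H := by
        rw [Matrix.transpose_mul, hHt]
      rw [← ht, quad_transpose]
    simp only [hw, neg_dotProduct, add_dotProduct, dotProduct_add]
    rw [c1, c2, c3]
    ring
  -- expansion of the diffusion quadratic form
  have d1 : v ⬝ᵥ a.mulVec (H.mulVec x) = x ⬝ᵥ (H * a).mulVec v := by
    rw [Matrix.mulVec_mulVec, dot_mulVec_symm v (a * H) x, Matrix.transpose_mul, hHt, haT]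
  have d2 : H.mulVec x ⬝ᵥ a.mulVec v = x ⬝ᵥ (H * a).mulVec v := by
    rw [dotProduct_comm, dot_mulVec_symm (a.mulVec v) H x, hHt,
      Matrix.mulVec_mulVec]
  have d3 : H.mulVec x ⬝ᵥ a.mulVec (H.mulVec x) = x ⬝ᵥ (H * a * H).mulVec x := by
    rw [Matrix.mulVec_mulVec, dotProduct_comm,
      dot_mulVec_symm ((a * H).mulVec x) H x, hHt, Matrix.mulVec_mulVec,
      ← Matrix.mul_assoc]
  have e2 : w x ⬝ᵥ a.mulVec (w x)
      = v ⬝ᵥ a.mulVec v + 4 * (x ⬝ᵥ (H * a).mulVec v)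
        + 4 * (x ⬝ᵥ (H * a * H).mulVec x) := by
    simp only [hw, Matrix.mulVec_neg, Matrix.mulVec_add, neg_dotProduct,
      dotProduct_neg, add_dotProduct, dotProduct_add, neg_neg]
    rw [d1, d2, d3]
    ring
  rw [hfd x (b + B.mulVec x), hsum, e1, e2, hr, hlam]
  linear_combination φ x * hE1 + φ x * hE2
end
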